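/- Let T' be a tree on a finite vertex set V and let S be a nonempty subset of V. Then the number of edges of T' with exactly one endpoint in S is at least (Σ_{v ∈ S} deg_{T'}(v)) − 2(|S| − 1). -/

import Mathlib

open scoped Classical

/-- The degree of a vertex `v` in the graph `G`. -/
noncomputable def degreeOf {V : Type*} [Fintype V] (G : SimpleGraph V) (v : V) : ℕ :=
  Set.ncard {u | G.Adj v u}

/-- For a tree `T'` on a finite vertex set `V` and a nonempty subset `S ⊆ V`, the number of
edges of `T'` with exactly one endpoint in `S` (counted as ordered pairs going out of `S`,
so each crossing edge is counted exactly once) is at least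
`(Σ_{v ∈ S} deg_{T'}(v)) − 2(|S| − 1)`. -/
theorem stmt5 {V : Type*} [Fintype V]
    (T' : SimpleGraph V) (hT' : T'.IsTree)
    (S : Finset V) (hS : S.Nonempty) :
    (∑ v ∈ S, (degreeOf T' v : ℤ)) - 2 * ((S.card : ℤ) - 1) ≤
      (Set.ncard {p : V × V | T'.Adj p.1 p.2 ∧ p.1 ∈ S ∧ p.2 ∉ S} : ℤ) := by
  classical
  obtain ⟨r, hr⟩ := hS
  choose f hf hf' using (hT'.existsUnique_path · r)
  -- step lemma
  have step : ∀ u v : V, T'.Adj u v → u ≠ r → (f u).getVert 1 ≠ v →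
      (f u).length < (f v).length := by
    intro u v huv hur hne
    by_cases h : (SimpleGraph.Walk.cons huv (f v)).IsPath
    · exfalso
      have := hf' u _ h
      apply hne
      rw [← this]
      simp [SimpleGraph.Walk.getVert_cons_succ, SimpleGraph.Walk.getVert_zero]
    · rw [SimpleGraph.Walk.cons_isPath_iff] at h
      push_neg at h
      have hu : u ∈ (f v).support := h (hf v)
      have hdrop : ((f v).dropUntil u hu).IsPath := (hf v).dropUntil hu
      have hfu : (f v).dropUntil u hu = f u := hf' u _ hdrop
      have hspec := (f v).take_spec hu
      have hlen := congrArg SimpleGraph.Walk.length hspec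
      rw [SimpleGraph.Walk.length_append, hfu] at hlen
      have htake : ((f v).takeUntil u hu).length ≠ 0 := by
        intro h0
        exact huv.ne' (SimpleGraph.Walk.eq_of_length_eq_zero h0)
      omega
  have key : ∀ u v : V, T'.Adj u v →
      (u ≠ r ∧ (f u).getVert 1 = v) ∨ (v ≠ r ∧ (f v).getVert 1 = u) := by
    intro u v huv
    by_cases hvr : v = r
    · subst hvr
      left
      refine ⟨huv.ne, ?_⟩
      have hpath : (SimpleGraph.Walk.cons huv SimpleGraph.Walk.nil).IsPath := by
        rw [SimpleGraph.Walk.cons_isPath_iff]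
        simpa using huv.ne
      rw [← hf' u _ hpath]
      simp
    · by_cases hur : u = r
      · subst hur
        right
        refine ⟨hvr, ?_⟩
        have hpath : (SimpleGraph.Walk.cons huv.symm SimpleGraph.Walk.nil).IsPath := by
          rw [SimpleGraph.Walk.cons_isPath_iff]
          simpa using hvr
        rw [← hf' v _ hpath]
        simp
      · by_cases h1 : (f u).getVert 1 = v
        · exact Or.inl ⟨hur, h1⟩
        · by_cases h2 : (f v).getVert 1 = u
          · exact Or.inr ⟨hvr, h2⟩
          · have := step u v huv hur h1
            have := step v u huv.symm hvr h2
            omega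
  set A : Finset (V × V) :=
    Finset.univ.filter fun p : V × V => T'.Adj p.1 p.2 ∧ p.1 ∈ S ∧ p.2 ∈ S with hA
  set B : Finset (V × V) :=
    Finset.univ.filter fun p : V × V => T'.Adj p.1 p.2 ∧ p.1 ∈ S ∧ p.2 ∉ S with hB
  -- the crossing set has cardinality B.card
  have hBset : {p : V × V | T'.Adj p.1 p.2 ∧ p.1 ∈ S ∧ p.2 ∉ S} = ↑B := by
    ext p; simp [hB]
  -- bound on A.card
  have hAle : A.card ≤ 2 * (S.erase r).card := by
    set F : V × V → V := fun p => if p.1 ≠ r ∧ (f p.1).getVert 1 = p.2 then p.1 else p.2 with hF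
    apply Finset.card_le_mul_card_image_of_maps_to (f := F)
    · intro p hp
      simp only [hA, Finset.mem_filter] at hp
      obtain ⟨-, hadj, h1, h2⟩ := hp
      show (if p.1 ≠ r ∧ (f p.1).getVert 1 = p.2 then p.1 else p.2) ∈ S.erase r
      split_ifs with h
      · exact Finset.mem_erase.2 ⟨h.1, h1⟩
      · rcases key p.1 p.2 hadj with hL | hR
        · exact absurd hL h
        · exact Finset.mem_erase.2 ⟨hR.1, h2⟩
    · intro w hw
      have hsub : (A.filter fun p => F p = w) ⊆
          {(w, (f w).getVert 1), ((f w).getVert 1, w)} := by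
        intro p hp
        simp only [Finset.mem_filter] at hp
        obtain ⟨hpA, hFp⟩ := hp
        simp only [hA, Finset.mem_filter] at hpA
        obtain ⟨-, hadj, h1, h2⟩ := hpA
        have hFp' : (if p.1 ≠ r ∧ (f p.1).getVert 1 = p.2 then p.1 else p.2) = w := hFp
        clear hFp
        rename' hFp' => hFp
        simp only [Finset.mem_insert, Finset.mem_singleton]
        split_ifs at hFp with h
        · left
          subst hFp
          exact Prod.ext rfl h.2.symm
        · right
          subst hFp
          rcases key p.1 p.2 hadj with hL | hR
          · exact absurd hL h
          · exact Prod.ext hR.2.symm rfl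
      calc (A.filter fun p => F p = w).card
          ≤ ({(w, (f w).getVert 1), ((f w).getVert 1, w)} : Finset (V × V)).card :=
            Finset.card_le_card hsub
        _ ≤ 2 := Finset.card_insert_le _ _ |>.trans (by simp)
  -- degree formula
  have hdeg : ∀ v : V, degreeOf T' v = (Finset.univ.filter fun u => T'.Adj v u).card := by
    intro v
    rw [degreeOf, Set.ncard_eq_toFinset_card']
    congr 1
    ext u
    simp
  -- fiberwise count
  have hAcard : A.card = ∑ v ∈ S, (Finset.univ.filter fun u => T'.Adj v u ∧ u ∈ S).card := by
    rw [Finset.card_eq_sum_card_fiberwise (f := Prod.fst) (t := S)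
      (fun p hp => by rw [Finset.mem_coe, hA, Finset.mem_filter] at hp; exact Finset.mem_coe.2 hp.2.2.1)]
    refine Finset.sum_congr rfl fun v hv => ?_
    have himg : A.filter (fun p => p.1 = v)
        = (Finset.univ.filter fun u => T'.Adj v u ∧ u ∈ S).image (fun u => (v, u)) := by
      ext ⟨a, b⟩
      simp only [hA, Finset.mem_filter, Finset.mem_image, Finset.mem_univ, true_and]
      constructor
      · rintro ⟨⟨hadj, ha, hb⟩, hfst⟩
        subst hfst
        exact ⟨b, ⟨hadj, hb⟩, rfl⟩
      · rintro ⟨u, ⟨hadj, hu⟩, heq⟩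
        obtain ⟨rfl, rfl⟩ := Prod.mk.injEq .. ▸ heq
        exact ⟨⟨hadj, hv, hu⟩, rfl⟩
    rw [himg, Finset.card_image_of_injective _ (fun a b h => by simpa using h)]
  have hBcard : B.card = ∑ v ∈ S, (Finset.univ.filter fun u => T'.Adj v u ∧ u ∉ S).card := by
    rw [Finset.card_eq_sum_card_fiberwise (f := Prod.fst) (t := S)
      (fun p hp => by rw [Finset.mem_coe, hB, Finset.mem_filter] at hp; exact Finset.mem_coe.2 hp.2.2.1)]
    refine Finset.sum_congr rfl fun v hv => ?_
    have himg : B.filter (fun p => p.1 = v)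
        = (Finset.univ.filter fun u => T'.Adj v u ∧ u ∉ S).image (fun u => (v, u)) := by
      ext ⟨a, b⟩
      simp only [hB, Finset.mem_filter, Finset.mem_image, Finset.mem_univ, true_and]
      constructor
      · rintro ⟨⟨hadj, ha, hb⟩, hfst⟩
        subst hfst
        exact ⟨b, ⟨hadj, hb⟩, rfl⟩
      · rintro ⟨u, ⟨hadj, hu⟩, heq⟩
        obtain ⟨rfl, rfl⟩ := Prod.mk.injEq .. ▸ heq
        exact ⟨⟨hadj, hv, hu⟩, rfl⟩
    rw [himg, Finset.card_image_of_injective _ (fun a b h => by simpa using h)]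
  have hsum : ∑ v ∈ S, degreeOf T' v = A.card + B.card := by
    rw [hAcard, hBcard, ← Finset.sum_add_distrib]
    refine Finset.sum_congr rfl fun v hv => ?_
    rw [hdeg v]
    have := Finset.card_filter_add_card_filter_not
      (s := Finset.univ.filter fun u => T'.Adj v u) (p := fun u => u ∈ S)
    rw [Finset.filter_filter, Finset.filter_filter] at this
    omega
  -- finish
  rw [hBset, Set.ncard_coe_finset]
  have h1 : (1 : ℕ) ≤ S.card := Finset.card_pos.2 ⟨r, hr⟩
  have herase : (S.erase r).card = S.card - 1 := Finset.card_erase_of_mem hr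
  have hsumZ : ∑ v ∈ S, (degreeOf T' v : ℤ) = (A.card : ℤ) + B.card := by
    exact_mod_cast congrArg (Nat.cast : ℕ → ℤ) hsum
  have hAleZ : (A.card : ℤ) ≤ 2 * ((S.card : ℤ) - 1) := by
    have := hAle
    rw [herase] at this
    have h2 : (A.card : ℤ) ≤ 2 * ((S.card - 1 : ℕ) : ℤ) := by exact_mod_cast this
    rwa [Nat.cast_sub h1] at h2
  linarith
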